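/- Every operator φ in the real Lie algebra uL^s is infinitesimally anti-Hermitian for the pairing ⟨,⟩: for all α, β ∈ ⋀_ℂV, ⟨φ(α), β⟩ + ⟨α, φ(β)⟩ = 0. -/

import Mathlib

namespace GG

attribute [local instance 100] LieRing.ofAssociativeRing

/-- Index set for the adapted coframe `v_{ij}`, `i ∈ {1,2}`, `j ∈ {0,…,s}`. -/
abbrev Idx (s : ℕ) := Fin 2 × Fin (s + 1)

/-- Linear-order encoding of the indices. -/
def enc {s : ℕ} (x : Idx s) : ℕ := x.2.1 * 2 + x.1.1

/-- The sign `(-1)^{#{a ∈ S | a < x}}` appearing in wedge/contraction with `v_x`. -/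
def sgn {s : ℕ} (S : Finset (Idx s)) (x : Idx s) : ℝ :=
  (-1 : ℝ) ^ (S.filter fun a => enc a < enc x).card

/-- The exterior algebra `⋀V` of the `2(s+1)`-dimensional real inner product space `V`,
modelled on its orthonormal basis of monomials indexed by subsets of the basis of `V`. -/
abbrev ExtV (s : ℕ) := EuclideanSpace ℝ (Finset (Idx s))

/-- Matrix of exterior multiplication by the basis vector `v_x` on basis monomials. -/
def Emat {s : ℕ} (x : Idx s) : Matrix (Finset (Idx s)) (Finset (Idx s)) ℝ :=
  Matrix.of fun T S => if x ∉ S ∧ T = insert x S then sgn S x else 0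

/-- Matrix of contraction with `∂/∂v_x` on basis monomials. -/
def Imat {s : ℕ} (x : Idx s) : Matrix (Finset (Idx s)) (Finset (Idx s)) ℝ :=
  Matrix.of fun T S => if x ∈ S ∧ T = S.erase x then sgn S x else 0

/-- The wedge operator `E_{ij}` on `⋀V`. -/
noncomputable def Eop {s : ℕ} (x : Idx s) : Module.End ℝ (ExtV s) :=
  Matrix.toEuclideanLin (Emat x)

/-- The contraction operator `I_{ij}` on `⋀V`. -/
noncomputable def Iop {s : ℕ} (x : Idx s) : Module.End ℝ (ExtV s) :=
  Matrix.toEuclideanLin (Imat x)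

/-- The complexification `⋀_ℂ V` of `⋀V`. -/
abbrev ExtVC (s : ℕ) := EuclideanSpace ℂ (Finset (Idx s))

/-- The ℂ-linear extension of the wedge operator `E_{ij}`. -/
noncomputable def EopC {s : ℕ} (x : Idx s) : Module.End ℂ (ExtVC s) :=
  Matrix.toEuclideanLin ((Emat x).map Complex.ofReal)

/-- The ℂ-linear extension of the contraction operator `I_{ij}`. -/
noncomputable def IopC {s : ℕ} (x : Idx s) : Module.End ℂ (ExtVC s) :=
  Matrix.toEuclideanLin ((Imat x).map Complex.ofReal)

/-- `L_{jk} = Σ_i E_{ij}∘E_{ik}` on `⋀_ℂ V`. -/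
noncomputable def LCop {s : ℕ} (j k : Fin (s + 1)) : Module.End ℂ (ExtVC s) :=
  ∑ i : Fin 2, EopC (i, j) * EopC (i, k)

/-- `Λ_{jk} = Σ_i I_{ik}∘I_{ij}` on `⋀_ℂ V`. -/
noncomputable def LamC {s : ℕ} (j k : Fin (s + 1)) : Module.End ℂ (ExtVC s) :=
  ∑ i : Fin 2, IopC (i, k) * IopC (i, j)

/-- `V_j = E_{1j}∘E_{2j}` on `⋀_ℂ V`. -/
noncomputable def VopC {s : ℕ} (j : Fin (s + 1)) : Module.End ℂ (ExtVC s) :=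
  EopC (0, j) * EopC (1, j)

/-- `A_j = I_{2j}∘I_{1j}` on `⋀_ℂ V`. -/
noncomputable def AopC {s : ℕ} (j : Fin (s + 1)) : Module.End ℂ (ExtVC s) :=
  IopC (1, j) * IopC (0, j)

/-- `J = Σ_j (E_{2j}∘I_{1j} − E_{1j}∘I_{2j})` on `⋀_ℂ V`. -/
noncomputable def JC (s : ℕ) : Module.End ℂ (ExtVC s) :=
  ∑ j : Fin (s + 1), (EopC (1, j) * IopC (0, j) - EopC (0, j) * IopC (1, j))

/-- The generators `{iL_{jk}, iΛ_{jk}, iV_j, iA_j}` of `uL^s`. -/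
def gensU (s : ℕ) : Set (Module.End ℂ (ExtVC s)) :=
  {f | (∃ j k : Fin (s + 1), f = Complex.I • LCop j k ∨ f = Complex.I • LamC j k) ∨
    (∃ j : Fin (s + 1), f = Complex.I • VopC j ∨ f = Complex.I • AopC j)}

/-- The real form `uL^s`, the real Lie subalgebra of `End_ℂ(⋀_ℂ V)` generated by
`{iL_{jk}, iΛ_{jk}, iV_j, iA_j}`. -/
noncomputable def uLs (s : ℕ) : LieSubalgebra ℝ (Module.End ℂ (ExtVC s)) :=
  LieSubalgebra.lieSpan ℝ _ (gensU s)

/-- The sign `ε(S)` defined by `e_S ∧ e_{Sᶜ} = ε(S)·Ω`. -/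
def eps {s : ℕ} (S : Finset (Idx s)) : ℝ :=
  (-1 : ℝ) ^ (∑ x ∈ S, ((Sᶜ).filter fun y => enc y < enc x).card)

/-- The natural Hermitian pairing `⟨α,β⟩ = i^{deg α · deg β}(α ∧ β̄, Ω)` on homogeneous
elements, extended sesquilinearly (conjugate-linear in the second argument), written out on
the orthonormal basis of monomials. -/
noncomputable def herm {s : ℕ} (a b : ExtVC s) : ℂ :=
  ∑ S : Finset (Idx s),
    Complex.I ^ (S.card * Sᶜ.card) * (eps S : ℂ) * a S * (starRingEnd ℂ) (b Sᶜ)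

/-! ### Auxiliary lemmas -/

open Finset
open scoped symmDiff

section Aux

variable {s : ℕ}

lemma enc_lt (x : Idx s) : enc x < 2 * (s + 1) := by
  obtain ⟨⟨i, hi⟩, ⟨j, hj⟩⟩ := x
  simp only [enc]
  omega

lemma enc_inj : Function.Injective (enc (s := s)) := by
  rintro ⟨⟨i1, h1⟩, ⟨j1, h2⟩⟩ ⟨⟨i2, h3⟩, ⟨j2, h4⟩⟩ h
  simp only [enc] at h
  simp only [Prod.mk.injEq, Fin.mk.injEq]
  omega

lemma enc_ne {x y : Idx s} (h : x ≠ y) : enc x ≠ enc y := fun hc => h (enc_inj hc)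

lemma card_filter_lt_univ (x : Idx s) :
    (univ.filter fun a : Idx s => enc a < enc x).card = enc x := by
  have hx := enc_lt x
  rw [← Finset.card_image_of_injective (univ.filter fun a : Idx s => enc a < enc x)
      (enc_inj (s := s))]
  have himg : (univ.filter fun a : Idx s => enc a < enc x).image enc
      = Finset.range (enc x) := by
    ext k
    simp only [Finset.mem_image, Finset.mem_filter, Finset.mem_univ, true_and,
      Finset.mem_range]
    constructor
    · rintro ⟨a, ha, rfl⟩; exact ha
    · intro hk
      have h2 : k % 2 < 2 := by omega
      have h2' : k / 2 < s + 1 := by omega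
      have henc : enc (s := s) (⟨k % 2, h2⟩, ⟨k / 2, h2'⟩) = k := by
        show k / 2 * 2 + k % 2 = k; omega
      exact ⟨(⟨k % 2, h2⟩, ⟨k / 2, h2'⟩), by rw [henc]; exact hk, henc⟩
  rw [himg, Finset.card_range]

lemma filter_split (S : Finset (Idx s)) (x : Idx s) :
    (S.filter fun a => enc a < enc x).card + (Sᶜ.filter fun a => enc a < enc x).card
      = enc x := by
  rw [← Finset.card_union_of_disjoint
    (Finset.disjoint_filter_filter disjoint_compl_right), ← Finset.filter_union,
    Finset.union_compl, card_filter_lt_univ]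

lemma card_filter_erase {A : Finset (Idx s)} {x : Idx s} (hx : x ∈ A) (y : Idx s) :
    ((A.erase x).filter fun a => enc a < enc y).card + (if enc x < enc y then 1 else 0)
      = (A.filter fun a => enc a < enc y).card := by
  rw [Finset.filter_erase]
  by_cases h : enc x < enc y
  · rw [if_pos h, Finset.card_erase_add_one (Finset.mem_filter.2 ⟨hx, h⟩)]
  · have hnm : x ∉ A.filter fun a => enc a < enc y :=
      fun hc => h (Finset.mem_filter.1 hc).2
    rw [if_neg h, Finset.erase_eq_of_notMem hnm, add_zero]

lemma card_filter_insert {A : Finset (Idx s)} {x : Idx s} (hx : x ∉ A) (y : Idx s) :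
    ((insert x A).filter fun a => enc a < enc y).card
      = (A.filter fun a => enc a < enc y).card + (if enc x < enc y then 1 else 0) := by
  rw [Finset.filter_insert]
  by_cases h : enc x < enc y
  · rw [if_pos h, if_pos h,
      Finset.card_insert_of_notMem (fun hc => hx (Finset.mem_filter.1 hc).1)]
  · rw [if_neg h, if_neg h, add_zero]

lemma neg_one_pow_congr {a b : ℕ} (h : a % 2 = b % 2) : ((-1 : ℝ)) ^ a = (-1) ^ b := by
  conv_lhs => rw [← Nat.div_add_mod a 2]
  conv_rhs => rw [← Nat.div_add_mod b 2]
  rw [pow_add, pow_add, pow_mul, pow_mul, neg_one_sq, one_pow, one_pow, h]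

lemma I_pow_congr {a b : ℕ} (h : a % 4 = b % 4) : Complex.I ^ a = Complex.I ^ b := by
  conv_lhs => rw [← Nat.div_add_mod a 4]
  conv_rhs => rw [← Nat.div_add_mod b 4]
  rw [pow_add, pow_add, pow_mul, pow_mul, Complex.I_pow_four, one_pow, one_pow, h]

lemma negOne_pow_to_I (k : ℕ) : ((-1 : ℂ)) ^ k = Complex.I ^ (2 * k) := by
  rw [pow_mul, Complex.I_sq]

lemma eps_insert {x : Idx s} {S : Finset (Idx s)} (hx : x ∉ S) :
    eps (insert x S) = (-1 : ℝ) ^ (enc x + S.card) * eps S := by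
  have hxc : x ∈ Sᶜ := Finset.mem_compl.2 hx
  unfold eps
  rw [← pow_add]
  apply neg_one_pow_congr
  rw [Finset.sum_insert hx, Finset.compl_insert]
  have h1 : ((Sᶜ.erase x).filter fun a => enc a < enc x).card
      = (Sᶜ.filter fun a => enc a < enc x).card := by
    have h := card_filter_erase hxc x
    rw [if_neg (lt_irrefl _), add_zero] at h
    exact h
  have h3 : (∑ a ∈ S, ((Sᶜ.erase x).filter fun b => enc b < enc a).card)
      + (∑ a ∈ S, if enc x < enc a then 1 else 0)
      = ∑ a ∈ S, ((Sᶜ).filter fun b => enc b < enc a).card := by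
    rw [← Finset.sum_add_distrib]
    exact Finset.sum_congr rfl fun a _ => card_filter_erase hxc a
  have h4 : (∑ a ∈ S, if enc x < enc a then 1 else 0)
      = (S.filter fun a => enc x < enc a).card := by
    rw [Finset.card_filter]
  have h5 : (S.filter fun a => enc x < enc a).card
      + (S.filter fun a => enc a < enc x).card = S.card := by
    have h5' := Finset.card_filter_add_card_filter_not
      (s := S) (p := fun a => enc x < enc a)
    have h5'' : (S.filter fun a => ¬ enc x < enc a) = S.filter fun a => enc a < enc x := by
      apply Finset.filter_congr
      intro a ha
      have hax : a ≠ x := fun hh => hx (hh ▸ ha)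
      have hne : enc a ≠ enc x := enc_ne hax
      constructor <;> omega
    rw [h5''] at h5'
    exact h5'
  have h6 := filter_split S x
  omega

lemma EopC_apply (x : Idx s) (a : ExtVC s) (T : Finset (Idx s)) :
    EopC x a T = if x ∈ T then ((sgn (T.erase x) x : ℂ)) * a (T.erase x) else 0 := by
  have hrw : EopC x a T
      = ∑ S : Finset (Idx s),
          (if x ∉ S ∧ T = insert x S then ((sgn S x : ℂ)) else 0) * a S := by
    simp [EopC, Matrix.toEuclideanLin_apply, Matrix.mulVec, dotProduct, Emat,
      Matrix.map_apply, apply_ite (Complex.ofReal)]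
  rw [hrw]
  by_cases hx : x ∈ T
  · rw [if_pos hx, Finset.sum_eq_single (T.erase x)]
    · rw [if_pos ⟨Finset.notMem_erase x T, (Finset.insert_erase hx).symm⟩]
    · intro S _ hS
      rw [if_neg, zero_mul]
      rintro ⟨h1, rfl⟩
      exact hS (Finset.erase_insert h1).symm
    · intro h; exact absurd (Finset.mem_univ _) h
  · rw [if_neg hx]
    apply Finset.sum_eq_zero
    intro S _
    rw [if_neg, zero_mul]
    rintro ⟨h1, rfl⟩
    exact hx (Finset.mem_insert_self x S)

lemma IopC_apply (x : Idx s) (a : ExtVC s) (T : Finset (Idx s)) :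
    IopC x a T = if x ∉ T then ((sgn (insert x T) x : ℂ)) * a (insert x T) else 0 := by
  have hrw : IopC x a T
      = ∑ S : Finset (Idx s),
          (if x ∈ S ∧ T = S.erase x then ((sgn S x : ℂ)) else 0) * a S := by
    simp [IopC, Matrix.toEuclideanLin_apply, Matrix.mulVec, dotProduct, Imat,
      Matrix.map_apply, apply_ite (Complex.ofReal)]
  rw [hrw]
  by_cases hx : x ∉ T
  · rw [if_pos hx, Finset.sum_eq_single (insert x T)]
    · rw [if_pos ⟨Finset.mem_insert_self x T, (Finset.erase_insert hx).symm⟩]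
    · intro S _ hS
      rw [if_neg, zero_mul]
      rintro ⟨h1, rfl⟩
      exact hS (Finset.insert_erase h1).symm
    · intro h; exact absurd (Finset.mem_univ _) h
  · rw [if_neg hx]
    apply Finset.sum_eq_zero
    intro S _
    rw [if_neg, zero_mul]
    rintro ⟨h1, rfl⟩
    exact hx (Finset.notMem_erase x S)

lemma scalar_EE {x y : Idx s} {T S : Finset (Idx s)} (hxy : x ≠ y)
    (hx : x ∈ T) (hy : y ∈ T) (hS : S = (T.erase x).erase y) :
    Complex.I ^ (T.card * Tᶜ.card) * ((eps T : ℂ)) * ((sgn (T.erase x) x : ℂ))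
        * ((sgn S y : ℂ))
      = Complex.I ^ (S.card * Sᶜ.card) * ((eps S : ℂ)) * ((sgn (Sᶜ.erase x) x : ℂ))
        * ((sgn ((Sᶜ.erase x).erase y) y : ℂ)) := by
  have hy' : y ∈ T.erase x := Finset.mem_erase.2 ⟨Ne.symm hxy, hy⟩
  have hxS : x ∉ S := hS ▸ fun hc => Finset.notMem_erase x T (Finset.mem_of_mem_erase hc)
  have hyS : y ∉ S := hS ▸ Finset.notMem_erase y _
  have hTx : T.erase x = insert y S := hS ▸ (Finset.insert_erase hy').symm
  have hT : T = insert x (insert y S) := by rw [← hTx]; exact (Finset.insert_erase hx).symm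
  have hxyS : x ∉ insert y S := by rw [← hTx]; exact Finset.notMem_erase x T
  have hxc : x ∈ Sᶜ := Finset.mem_compl.2 hxS
  have hyc : y ∈ Sᶜ := Finset.mem_compl.2 hyS
  have hyc' : y ∈ Sᶜ.erase x := Finset.mem_erase.2 ⟨Ne.symm hxy, hyc⟩
  have hxcy : x ∈ Sᶜ.erase y := Finset.mem_erase.2 ⟨hxy, hxc⟩
  -- cardinalities
  have hc1 : (insert y S).card = S.card + 1 := Finset.card_insert_of_notMem hyS
  have hc2 : T.card = S.card + 2 := by
    rw [hT, Finset.card_insert_of_notMem hxyS, hc1]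
  have hTc : Tᶜ = (Sᶜ.erase y).erase x := by
    rw [hT, Finset.compl_insert, Finset.compl_insert, Finset.erase_right_comm]
  have hc3 : Sᶜ.card = Tᶜ.card + 2 := by
    have e1 := Finset.card_erase_add_one hxcy
    have e2 := Finset.card_erase_add_one hyc
    rw [hTc]
    omega
  have hpar : S.card + Sᶜ.card = 2 * (s + 1) := by
    have := Finset.card_add_card_compl S
    simpa using this
  -- counts
  have hA := filter_split S x
  have hB := filter_split S y
  have hcnt1 : ((T.erase x).filter fun a => enc a < enc x).card
      = (S.filter fun a => enc a < enc x).card + (if enc y < enc x then 1 else 0) := by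
    rw [hTx, card_filter_insert hyS x]
  have hcnt3 : ((Sᶜ.erase x).filter fun a => enc a < enc x).card
      = (Sᶜ.filter fun a => enc a < enc x).card := by
    have h := card_filter_erase hxc x
    rw [if_neg (lt_irrefl _), add_zero] at h
    exact h
  have hcnt4a : (((Sᶜ.erase x).erase y).filter fun a => enc a < enc y).card
      = ((Sᶜ.erase x).filter fun a => enc a < enc y).card := by
    have h := card_filter_erase hyc' y
    rw [if_neg (lt_irrefl _), add_zero] at h
    exact h
  have hcnt4b := card_filter_erase hxc y
  have heps : eps T
      = (-1 : ℝ) ^ (enc x + (insert y S).card) * ((-1 : ℝ) ^ (enc y + S.card) * eps S) := by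
    rw [hT, eps_insert hxyS, eps_insert hyS]
  -- assemble
  rw [heps, hc1, hc2, hc3]
  simp only [sgn]
  rw [hcnt1, hcnt3, hcnt4a]
  unfold eps
  push_cast
  simp only [negOne_pow_to_I]
  simp only [← pow_add]
  apply I_pow_congr
  have hp1 : (S.card + 2) * Tᶜ.card = S.card * Tᶜ.card + 2 * Tᶜ.card := by ring
  have hp2 : S.card * (Tᶜ.card + 2) = S.card * Tᶜ.card + 2 * S.card := by ring
  rw [hp1, hp2]
  by_cases hord : enc x < enc y
  · have hord' : ¬ enc y < enc x := by omega
    rw [if_pos hord] at hcnt4b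
    rw [if_neg hord']
    omega
  · have hord' : enc y < enc x := by
      have := enc_ne hxy
      omega
    rw [if_neg hord] at hcnt4b
    rw [if_pos hord']
    omega

/-- The involution `T ↦ T ∆ {x,y}` of the set of basis monomials. -/
def flipXY (x y : Idx s) : Finset (Idx s) ≃ Finset (Idx s) where
  toFun T := T ∆ ({x, y} : Finset (Idx s))
  invFun T := T ∆ ({x, y} : Finset (Idx s))
  left_inv T := symmDiff_symmDiff_cancel_right _ T
  right_inv T := symmDiff_symmDiff_cancel_right _ T

lemma adjEE {x y : Idx s} (hxy : x ≠ y) (a b : ExtVC s) :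
    herm ((EopC x * EopC y) a) b = herm a ((EopC x * EopC y) b) := by
  unfold herm
  refine Fintype.sum_equiv (flipXY x y) _ _ ?_
  intro T
  simp only [flipXY, Equiv.coe_fn_mk, Module.End.mul_apply]
  rw [EopC_apply, EopC_apply, EopC_apply, EopC_apply]
  have hmem : ∀ c : Idx s, c ∈ T ∆ ({x, y} : Finset (Idx s))
      ↔ ((c ∈ T ∧ c ≠ x ∧ c ≠ y) ∨ ((c = x ∨ c = y) ∧ c ∉ T)) := by
    intro c
    simp [Finset.mem_symmDiff]
  by_cases hx : x ∈ T
  · by_cases hy : y ∈ T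
    · -- main case
      have hy' : y ∈ T.erase x := Finset.mem_erase.2 ⟨Ne.symm hxy, hy⟩
      have hSx : x ∉ T ∆ ({x, y} : Finset (Idx s)) := by
        rw [hmem]; simp [hx]
      have hSy : y ∉ T ∆ ({x, y} : Finset (Idx s)) := by
        rw [hmem]; simp [hy]
      have hS_eq : (T.erase x).erase y = T ∆ ({x, y} : Finset (Idx s)) := by
        ext c
        rw [hmem, Finset.mem_erase, Finset.mem_erase]
        constructor
        · rintro ⟨hcy, hcx, hcT⟩
          exact Or.inl ⟨hcT, hcx, hcy⟩
        · rintro (⟨hcT, hcx, hcy⟩ | ⟨(rfl | rfl), hcT⟩)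
          · exact ⟨hcy, hcx, hcT⟩
          · exact absurd hx hcT
          · exact absurd hy hcT
      have hxSc : x ∈ (T ∆ ({x, y} : Finset (Idx s)))ᶜ := Finset.mem_compl.2 hSx
      have hySc' : y ∈ (T ∆ ({x, y} : Finset (Idx s)))ᶜ.erase x :=
        Finset.mem_erase.2 ⟨Ne.symm hxy, Finset.mem_compl.2 hSy⟩
      have hTc_eq : (((T ∆ ({x, y} : Finset (Idx s)))ᶜ.erase x).erase y) = Tᶜ := by
        ext c
        by_cases hcx : c = x
        · subst hcx
          simp [Finset.mem_erase, Finset.mem_compl, hx, hxy]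
        · by_cases hcy : c = y
          · subst hcy
            simp [Finset.mem_erase, Finset.mem_compl, hy]
          · simp only [Finset.mem_erase, Finset.mem_compl]
            constructor
            · rintro ⟨-, -, hc⟩ hcT
              exact hc ((hmem c).2 (Or.inl ⟨hcT, hcx, hcy⟩))
            · intro hcT
              refine ⟨hcy, hcx, fun hc => ?_⟩
              rcases (hmem c).1 hc with ⟨hcT', -⟩ | ⟨(rfl | rfl), -⟩
              · exact hcT hcT'
              · exact hcx rfl
              · exact hcy rfl
      rw [if_pos hx, if_pos hy', if_pos hxSc, if_pos hySc']
      rw [map_mul, map_mul, Complex.conj_ofReal, Complex.conj_ofReal]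
      rw [← hS_eq]
      have hE : ((((T.erase x).erase y)ᶜ.erase x).erase y) = Tᶜ := by
        rw [hS_eq]; exact hTc_eq
      rw [show b ((((T.erase x).erase y)ᶜ.erase x).erase y) = b Tᶜ from congrArg b hE]
      linear_combination
        (a ((T.erase x).erase y) * (starRingEnd ℂ) (b Tᶜ)) * scalar_EE hxy hx hy rfl
    · -- x ∈ T, y ∉ T
      have h1 : y ∉ T.erase x := fun hc => hy (Finset.mem_of_mem_erase hc)
      have hymem : y ∈ T ∆ ({x, y} : Finset (Idx s)) :=
        (hmem y).2 (Or.inr ⟨Or.inr rfl, hy⟩)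
      have h2 : y ∉ (T ∆ ({x, y} : Finset (Idx s)))ᶜ.erase x :=
        fun hc => (Finset.mem_compl.1 (Finset.mem_of_mem_erase hc)) hymem
      rw [if_neg h1, if_neg h2]
      simp
  · -- x ∉ T
    have hxmem : x ∈ T ∆ ({x, y} : Finset (Idx s)) :=
      (hmem x).2 (Or.inr ⟨Or.inl rfl, hx⟩)
    have h2 : x ∉ (T ∆ ({x, y} : Finset (Idx s)))ᶜ :=
      fun hc => (Finset.mem_compl.1 hc) hxmem
    rw [if_neg hx, if_neg h2]
    simp

lemma scalar_II {x y : Idx s} {V S : Finset (Idx s)} (hxy : x ≠ y)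
    (hx : x ∉ V) (hy : y ∉ V) (hS : S = insert x (insert y V)) :
    Complex.I ^ (V.card * Vᶜ.card) * ((eps V : ℂ)) * ((sgn (insert x V) x : ℂ))
        * ((sgn (insert y (insert x V)) y : ℂ))
      = Complex.I ^ (S.card * Sᶜ.card) * ((eps S : ℂ)) * ((sgn (insert x Sᶜ) x : ℂ))
        * ((sgn (insert y (insert x Sᶜ)) y : ℂ)) := by
  have hxyV : x ∉ insert y V := by simp [Finset.mem_insert, hxy, hx]
  have hxVc : x ∈ Vᶜ := Finset.mem_compl.2 hx
  have hyVc : y ∈ Vᶜ := Finset.mem_compl.2 hy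
  have hxVc' : x ∈ Vᶜ.erase y := Finset.mem_erase.2 ⟨hxy, hxVc⟩
  have hSc : Sᶜ = (Vᶜ.erase y).erase x := by
    rw [hS, Finset.compl_insert, Finset.compl_insert]
  have hi1 : insert x Sᶜ = Vᶜ.erase y := by rw [hSc]; exact Finset.insert_erase hxVc'
  have hi2 : insert y (insert x Sᶜ) = Vᶜ := by rw [hi1]; exact Finset.insert_erase hyVc
  have hc0 : (insert y V).card = V.card + 1 := Finset.card_insert_of_notMem hy
  have hc1 : S.card = V.card + 2 := by
    rw [hS, Finset.card_insert_of_notMem hxyV, hc0]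
  have hc2 : Vᶜ.card = Sᶜ.card + 2 := by
    have e1 := Finset.card_erase_add_one hxVc'
    have e2 := Finset.card_erase_add_one hyVc
    rw [hSc]
    omega
  have hpar : V.card + Vᶜ.card = 2 * (s + 1) := by
    have := Finset.card_add_card_compl V
    simpa using this
  have hA := filter_split V x
  have hB := filter_split V y
  have hcnt1 : ((insert x V).filter fun a => enc a < enc x).card
      = (V.filter fun a => enc a < enc x).card := by
    rw [card_filter_insert hx x, if_neg (lt_irrefl _), add_zero]
  have hcnt2 : ((insert y (insert x V)).filter fun a => enc a < enc y).card
      = (V.filter fun a => enc a < enc y).card + (if enc x < enc y then 1 else 0) := by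
    have hyxV : y ∉ insert x V := by simp [Finset.mem_insert, Ne.symm hxy, hy]
    rw [card_filter_insert hyxV y, if_neg (lt_irrefl _), add_zero, card_filter_insert hx y]
  have hcnt3 := card_filter_erase hyVc x
  have heps : eps S
      = (-1 : ℝ) ^ (enc x + (insert y V).card) * ((-1 : ℝ) ^ (enc y + V.card) * eps V) := by
    rw [hS, eps_insert hxyV, eps_insert hy]
  rw [heps, hc0, hc1, hc2, hi2, hi1]
  simp only [sgn]
  rw [hcnt1, hcnt2]
  unfold eps
  push_cast
  simp only [negOne_pow_to_I]
  simp only [← pow_add]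
  apply I_pow_congr
  have hp1 : V.card * (Sᶜ.card + 2) = V.card * Sᶜ.card + 2 * V.card := by ring
  have hp2 : (V.card + 2) * Sᶜ.card = V.card * Sᶜ.card + 2 * Sᶜ.card := by ring
  rw [hp1, hp2]
  by_cases hord : enc x < enc y
  · have hord' : ¬ enc y < enc x := by omega
    rw [if_pos hord]
    rw [if_neg hord'] at hcnt3
    omega
  · have hord' : enc y < enc x := by
      have := enc_ne hxy
      omega
    rw [if_neg hord]
    rw [if_pos hord'] at hcnt3
    omega

lemma adjII {x y : Idx s} (hxy : x ≠ y) (a b : ExtVC s) :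
    herm ((IopC x * IopC y) a) b = herm a ((IopC x * IopC y) b) := by
  unfold herm
  refine Fintype.sum_equiv (flipXY x y) _ _ ?_
  intro V
  simp only [flipXY, Equiv.coe_fn_mk, Module.End.mul_apply]
  rw [IopC_apply, IopC_apply, IopC_apply, IopC_apply]
  have hmem : ∀ c : Idx s, c ∈ V ∆ ({x, y} : Finset (Idx s))
      ↔ ((c ∈ V ∧ c ≠ x ∧ c ≠ y) ∨ ((c = x ∨ c = y) ∧ c ∉ V)) := by
    intro c
    simp [Finset.mem_symmDiff]
  by_cases hx : x ∈ V
  · have hxS : x ∉ V ∆ ({x, y} : Finset (Idx s)) := by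
      rw [hmem]; simp [hx]
    have h2 : ¬ x ∉ (V ∆ ({x, y} : Finset (Idx s)))ᶜ :=
      fun hc => hc (Finset.mem_compl.2 hxS)
    rw [if_neg (not_not_intro hx), if_neg h2]
    simp
  · by_cases hy : y ∈ V
    · have hyS : y ∉ V ∆ ({x, y} : Finset (Idx s)) := by
        rw [hmem]; simp [hy]
      have h1 : ¬ y ∉ insert x V := fun hc => hc (Finset.mem_insert_of_mem hy)
      have h2 : ¬ y ∉ insert x ((V ∆ ({x, y} : Finset (Idx s)))ᶜ) :=
        fun hc => hc (Finset.mem_insert_of_mem (Finset.mem_compl.2 hyS))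
      rw [if_neg h1, if_neg h2]
      simp
    · -- main case
      have hxS : x ∈ V ∆ ({x, y} : Finset (Idx s)) :=
        (hmem x).2 (Or.inr ⟨Or.inl rfl, hx⟩)
      have hyS : y ∈ V ∆ ({x, y} : Finset (Idx s)) :=
        (hmem y).2 (Or.inr ⟨Or.inr rfl, hy⟩)
      have hS_eq : insert x (insert y V) = V ∆ ({x, y} : Finset (Idx s)) := by
        ext c
        rw [hmem, Finset.mem_insert, Finset.mem_insert]
        constructor
        · rintro (rfl | rfl | hcV)
          · exact Or.inr ⟨Or.inl rfl, hx⟩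
          · exact Or.inr ⟨Or.inr rfl, hy⟩
          · by_cases hcx : c = x
            · exact (hx (hcx ▸ hcV)).elim
            · by_cases hcy : c = y
              · exact (hy (hcy ▸ hcV)).elim
              · exact Or.inl ⟨hcV, hcx, hcy⟩
        · rintro (⟨hcV, -, -⟩ | ⟨(rfl | rfl), -⟩)
          · exact Or.inr (Or.inr hcV)
          · exact Or.inl rfl
          · exact Or.inr (Or.inl rfl)
      have hyxV : y ∉ insert x V := by simp [Finset.mem_insert, Ne.symm hxy, hy]
      have hxSc : x ∉ (V ∆ ({x, y} : Finset (Idx s)))ᶜ :=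
        fun hc => (Finset.mem_compl.1 hc) hxS
      have hySc : y ∉ insert x ((V ∆ ({x, y} : Finset (Idx s)))ᶜ) := by
        intro hc
        rcases Finset.mem_insert.1 hc with h | h
        · exact (Ne.symm hxy) h
        · exact (Finset.mem_compl.1 h) hyS
      rw [if_pos hx, if_pos hyxV, if_pos hxSc, if_pos hySc]
      rw [map_mul, map_mul, Complex.conj_ofReal, Complex.conj_ofReal]
      rw [← hS_eq]
      have hE : insert y (insert x ((insert x (insert y V))ᶜ)) = Vᶜ := by
        rw [Finset.compl_insert, Finset.compl_insert,
          Finset.insert_erase (Finset.mem_erase.2 ⟨hxy, Finset.mem_compl.2 hx⟩),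
          Finset.insert_erase (Finset.mem_compl.2 hy)]
      rw [show b (insert y (insert x ((insert x (insert y V))ᶜ))) = b Vᶜ from
        congrArg b hE]
      rw [show a (insert y (insert x V)) = a (insert x (insert y V)) from
        congrArg a (Finset.insert_comm y x V)]
      linear_combination
        (a (insert x (insert y V)) * (starRingEnd ℂ) (b Vᶜ)) * scalar_II hxy hx hy rfl

lemma EE_self (x : Idx s) : EopC (s := s) x * EopC x = 0 := by
  apply LinearMap.ext
  intro a
  ext T
  simp [Module.End.mul_apply, EopC_apply, Finset.notMem_erase]

lemma II_self (x : Idx s) : IopC (s := s) x * IopC x = 0 := by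
  apply LinearMap.ext
  intro a
  ext T
  simp [Module.End.mul_apply, IopC_apply, Finset.mem_insert_self]

lemma herm_zero_left (b : ExtVC s) : herm 0 b = 0 := by
  unfold herm
  apply Finset.sum_eq_zero
  intro S _
  simp

lemma herm_zero_right (a : ExtVC s) : herm a 0 = 0 := by
  unfold herm
  apply Finset.sum_eq_zero
  intro S _
  simp

lemma herm_add_left (a a' b : ExtVC s) : herm (a + a') b = herm a b + herm a' b := by
  unfold herm
  rw [← Finset.sum_add_distrib]
  refine Finset.sum_congr rfl fun S _ => ?_
  rw [show (a + a') S = a S + a' S from rfl]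
  ring

lemma herm_add_right (a b b' : ExtVC s) : herm a (b + b') = herm a b + herm a b' := by
  unfold herm
  rw [← Finset.sum_add_distrib]
  refine Finset.sum_congr rfl fun S _ => ?_
  rw [show (b + b') Sᶜ = b Sᶜ + b' Sᶜ from rfl, map_add]
  ring

lemma herm_sub_left (a a' b : ExtVC s) : herm (a - a') b = herm a b - herm a' b := by
  unfold herm
  rw [← Finset.sum_sub_distrib]
  refine Finset.sum_congr rfl fun S _ => ?_
  rw [show (a - a') S = a S - a' S from rfl]
  ring

lemma herm_sub_right (a b b' : ExtVC s) : herm a (b - b') = herm a b - herm a b' := by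
  unfold herm
  rw [← Finset.sum_sub_distrib]
  refine Finset.sum_congr rfl fun S _ => ?_
  rw [show (b - b') Sᶜ = b Sᶜ - b' Sᶜ from rfl, map_sub]
  ring

lemma herm_smul_left (c : ℂ) (a b : ExtVC s) : herm (c • a) b = c * herm a b := by
  unfold herm
  rw [Finset.mul_sum]
  refine Finset.sum_congr rfl fun S _ => ?_
  rw [show (c • a) S = c * a S from rfl]
  ring

lemma herm_smul_right (c : ℂ) (a b : ExtVC s) :
    herm a (c • b) = (starRingEnd ℂ) c * herm a b := by
  unfold herm
  rw [Finset.mul_sum]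
  refine Finset.sum_congr rfl fun S _ => ?_
  rw [show (c • b) Sᶜ = c * b Sᶜ from rfl, map_mul]
  ring

lemma herm_real_smul_left (r : ℝ) (a b : ExtVC s) : herm (r • a) b = (r : ℂ) * herm a b := by
  unfold herm
  rw [Finset.mul_sum]
  refine Finset.sum_congr rfl fun S _ => ?_
  rw [show (r • a) S = r • a S from rfl, Complex.real_smul]
  ring

lemma herm_real_smul_right (r : ℝ) (a b : ExtVC s) :
    herm a (r • b) = (r : ℂ) * herm a b := by
  unfold herm
  rw [Finset.mul_sum]
  refine Finset.sum_congr rfl fun S _ => ?_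
  rw [show (r • b) Sᶜ = r • b Sᶜ from rfl, Complex.real_smul, map_mul, Complex.conj_ofReal]
  ring

lemma adjEE_all (x y : Idx s) (a b : ExtVC s) :
    herm ((EopC x * EopC y) a) b = herm a ((EopC x * EopC y) b) := by
  by_cases hxy : x = y
  · subst hxy
    rw [EE_self]
    simp only [LinearMap.zero_apply]
    rw [herm_zero_left, herm_zero_right]
  · exact adjEE hxy a b

lemma adjII_all (x y : Idx s) (a b : ExtVC s) :
    herm ((IopC x * IopC y) a) b = herm a ((IopC x * IopC y) b) := by
  by_cases hxy : x = y
  · subst hxy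
    rw [II_self]
    simp only [LinearMap.zero_apply]
    rw [herm_zero_left, herm_zero_right]
  · exact adjII hxy a b

end Aux

section Main

variable {s : ℕ}

lemma LCop_selfadj (j k : Fin (s + 1)) (a b : ExtVC s) :
    herm (LCop j k a) b = herm a (LCop j k b) := by
  unfold LCop
  rw [LinearMap.sum_apply, LinearMap.sum_apply, Fin.sum_univ_two, Fin.sum_univ_two,
    herm_add_left, herm_add_right, adjEE_all, adjEE_all]

lemma LamC_selfadj (j k : Fin (s + 1)) (a b : ExtVC s) :
    herm (LamC j k a) b = herm a (LamC j k b) := by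
  unfold LamC
  rw [LinearMap.sum_apply, LinearMap.sum_apply, Fin.sum_univ_two, Fin.sum_univ_two,
    herm_add_left, herm_add_right, adjII_all, adjII_all]

lemma VopC_selfadj (j : Fin (s + 1)) (a b : ExtVC s) :
    herm (VopC j a) b = herm a (VopC j b) := adjEE_all _ _ a b

lemma AopC_selfadj (j : Fin (s + 1)) (a b : ExtVC s) :
    herm (AopC j a) b = herm a (AopC j b) := adjII_all _ _ a b

lemma gen_mem_good {Φ : Module.End ℂ (ExtVC s)}
    (hΦ : ∀ a b : ExtVC s, herm (Φ a) b = herm a (Φ b)) :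
    ∀ a b : ExtVC s, herm ((Complex.I • Φ) a) b + herm a ((Complex.I • Φ) b) = 0 := by
  intro a b
  rw [LinearMap.smul_apply, LinearMap.smul_apply, herm_smul_left, herm_smul_right,
    hΦ a b, Complex.conj_I]
  ring

/-- The Lie subalgebra of operators infinitesimally anti-Hermitian for `herm`. -/
noncomputable def good (s : ℕ) : LieSubalgebra ℝ (Module.End ℂ (ExtVC s)) where
  carrier := {φ | ∀ a b : ExtVC s, herm (φ a) b + herm a (φ b) = 0}
  add_mem' := by
    intro φ ψ hφ hψ
    intro a b
    rw [LinearMap.add_apply, LinearMap.add_apply, herm_add_left, herm_add_right]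
    linear_combination hφ a b + hψ a b
  zero_mem' := by
    intro a b
    simp only [LinearMap.zero_apply]
    rw [herm_zero_left, herm_zero_right, add_zero]
  smul_mem' := by
    intro r φ hφ
    intro a b
    rw [LinearMap.smul_apply, LinearMap.smul_apply, herm_real_smul_left,
      herm_real_smul_right]
    linear_combination (r : ℂ) * hφ a b
  lie_mem' := by
    intro φ ψ hφ hψ
    intro a b
    have h1 : ∀ u v : ExtVC s, herm (φ u) v = - herm u (φ v) := fun u v => by
      linear_combination hφ u v
    have h2 : ∀ u v : ExtVC s, herm (ψ u) v = - herm u (ψ v) := fun u v => by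
      linear_combination hψ u v
    rw [Ring.lie_def, LinearMap.sub_apply, LinearMap.sub_apply, Module.End.mul_apply,
      Module.End.mul_apply, Module.End.mul_apply, Module.End.mul_apply, herm_sub_left,
      herm_sub_right, h1 (ψ a) b, h2 a (φ b), h2 (φ a) b, h1 a (ψ b)]
    ring

end Main

theorem statement_16 (s : ℕ) (hs : 2 ≤ s) :
    ∀ φ ∈ uLs s, ∀ α β : ExtVC s, herm (φ α) β + herm α (φ β) = 0 := by
  intro φ hφ
  have hle : uLs s ≤ good s := by
    apply (LieSubalgebra.lieSpan_le).2
    rintro f hf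
    rcases hf with ⟨j, k, (rfl | rfl)⟩ | ⟨j, (rfl | rfl)⟩
    · exact gen_mem_good (LCop_selfadj j k)
    · exact gen_mem_good (LamC_selfadj j k)
    · exact gen_mem_good (VopC_selfadj j)
    · exact gen_mem_good (AopC_selfadj j)
  exact hle hφ

end GG
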